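/- Let K be a field and let r, s be integers with 1 ≤ r < s and s − r not divisible by 3. Let φ : K[Z₁, Z₂, Z₃] → K[t] be the K-algebra homomorphism determined by Z₁ ↦ t³, Z₂ ↦ t^{2r+s}, Z₃ ↦ t^{r+2s}. Then the kernel of φ is the ideal generated by the three polynomials Z₂² − Z₁^r Z₃, Z₂Z₃ − Z₁^{r+s}, and Z₃² − Z₁^s Z₂. -/
import Mathlib


open MvPolynomial Polynomial

/-- Coefficient extraction: if a K-combination of `expand 3` polynomials times powers of X
with exponents in distinct residue classes mod 3 vanishes, each piece vanishes. -/
lemma stmt3_vanish (K : Type*) [Field K] (e1 e2 : ℕ) (h1 : ¬ 3 ∣ e1) (h2 : ¬ 3 ∣ e2)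
    (h12 : ¬ 3 ∣ (e1 + 2 * e2)) (a b c : Polynomial K)
    (h : Polynomial.expand K 3 a + Polynomial.expand K 3 b * Polynomial.X ^ e1
        + Polynomial.expand K 3 c * Polynomial.X ^ e2 = 0) :
    a = 0 ∧ b = 0 ∧ c = 0 := by
  have key : ∀ n, (Polynomial.expand K 3 a).coeff n
      + (Polynomial.expand K 3 b * Polynomial.X ^ e1).coeff n
      + (Polynomial.expand K 3 c * Polynomial.X ^ e2).coeff n = 0 := by
    intro n
    have := congrArg (fun p => Polynomial.coeff p n) h
    simpa using this
  have h30 : (0:ℕ) < 3 := by norm_num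
  refine ⟨?_, ?_, ?_⟩
  · ext m
    have := key (3*m)
    simp only [Polynomial.coeff_mul_X_pow', Polynomial.coeff_expand h30] at this
    split_ifs at this with hA hB hC hD hE hF hG <;>
      first
        | (exfalso; omega)
        | (rw [Nat.mul_div_cancel_left m h30] at this; simpa using this)
  · ext m
    have := key (3*m + e1)
    simp only [Polynomial.coeff_mul_X_pow', Polynomial.coeff_expand h30] at this
    split_ifs at this with hA hB hC hD hE hF hG <;>
      first
        | (exfalso; omega)
        | (rw [show (3*m + e1 - e1) = 3*m by omega, Nat.mul_div_cancel_left m h30] at this;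
           simpa using this)
  · ext m
    have := key (3*m + e2)
    simp only [Polynomial.coeff_mul_X_pow', Polynomial.coeff_expand h30] at this
    split_ifs at this with hA hB hC hD hE hF hG <;>
      first
        | (exfalso; omega)
        | (rw [show (3*m + e2 - e2) = 3*m by omega, Nat.mul_div_cancel_left m h30] at this;
           simpa using this)

lemma stmt3_reduce (K : Type*) [Field K] (r s : ℕ) (p : MvPolynomial (Fin 3) K) :
    ∃ a b c : Polynomial K,
      p - (Polynomial.aeval (MvPolynomial.X 0) a
        + Polynomial.aeval (MvPolynomial.X 0) b * MvPolynomial.X 1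
        + Polynomial.aeval (MvPolynomial.X 0) c * MvPolynomial.X 2)
        ∈ Ideal.span ({ (MvPolynomial.X 1)^2 - (MvPolynomial.X 0)^r * MvPolynomial.X 2,
            MvPolynomial.X 1 * MvPolynomial.X 2 - (MvPolynomial.X 0)^(r+s),
            (MvPolynomial.X 2)^2 - (MvPolynomial.X 0)^s * MvPolynomial.X 1 } :
            Set (MvPolynomial (Fin 3) K)) := by
  set I := Ideal.span ({ (MvPolynomial.X 1)^2 - (MvPolynomial.X 0)^r * MvPolynomial.X 2,
            MvPolynomial.X 1 * MvPolynomial.X 2 - (MvPolynomial.X 0)^(r+s),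
            (MvPolynomial.X 2)^2 - (MvPolynomial.X 0)^s * MvPolynomial.X 1 } :
            Set (MvPolynomial (Fin 3) K)) with hI
  have hf1 : (MvPolynomial.X 1)^2 - (MvPolynomial.X 0)^r * MvPolynomial.X 2 ∈ I :=
    Ideal.subset_span (by simp)
  have hf2 : MvPolynomial.X 1 * MvPolynomial.X 2 - (MvPolynomial.X 0)^(r+s) ∈ I :=
    Ideal.subset_span (by simp)
  have hf3 : (MvPolynomial.X 2)^2 - (MvPolynomial.X 0)^s * MvPolynomial.X 1 ∈ I :=
    Ideal.subset_span (by simp)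
  induction p using MvPolynomial.induction_on with
  | C k =>
      refine ⟨Polynomial.C k, 0, 0, ?_⟩
      simp
  | add p q hp hq =>
      obtain ⟨a, b, c, h⟩ := hp
      obtain ⟨a', b', c', h'⟩ := hq
      refine ⟨a + a', b + b', c + c', ?_⟩
      have := Ideal.add_mem I h h'
      convert this using 1
      simp only [map_add]
      ring
  | mul_X p i hp =>
      obtain ⟨a, b, c, h⟩ := hp
      fin_cases i
      · refine ⟨a * Polynomial.X, b * Polynomial.X, c * Polynomial.X, ?_⟩
        have := Ideal.mul_mem_right (MvPolynomial.X 0) I h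
        convert this using 1
        simp only [Fin.isValue, Fin.mk_zero, Fin.mk_one, Fin.reduceFinMk, map_mul, Polynomial.aeval_X]
        ring
      · refine ⟨c * Polynomial.X ^ (r+s), a, b * Polynomial.X ^ r, ?_⟩
        have h1 := Ideal.mul_mem_right (MvPolynomial.X 1) I h
        have h2 := Ideal.mul_mem_left I (Polynomial.aeval (MvPolynomial.X 0) b) hf1
        have h3 := Ideal.mul_mem_left I (Polynomial.aeval (MvPolynomial.X 0) c) hf2
        have := Ideal.add_mem I (Ideal.add_mem I h1 h2) h3
        convert this using 1
        simp only [Fin.isValue, Fin.mk_zero, Fin.mk_one, Fin.reduceFinMk, map_mul, map_pow, Polynomial.aeval_X]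
        ring
      · refine ⟨b * Polynomial.X ^ (r+s), c * Polynomial.X ^ s, a, ?_⟩
        have h1 := Ideal.mul_mem_right (MvPolynomial.X 2) I h
        have h2 := Ideal.mul_mem_left I (Polynomial.aeval (MvPolynomial.X 0) c) hf3
        have h3 := Ideal.mul_mem_left I (Polynomial.aeval (MvPolynomial.X 0) b) hf2
        have := Ideal.add_mem I (Ideal.add_mem I h1 h2) h3
        convert this using 1
        simp only [Fin.isValue, Fin.mk_zero, Fin.mk_one, Fin.reduceFinMk, map_mul, map_pow, Polynomial.aeval_X]
        ring

/-- Let `K` be a field, `r, s` integers with `1 ≤ r < s` and `3 ∤ (s − r)`.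
Let `φ : K[Z₁,Z₂,Z₃] → K[t]` be the `K`-algebra homomorphism determined by
`Z₁ ↦ t³`, `Z₂ ↦ t^{2r+s}`, `Z₃ ↦ t^{r+2s}`. Then `ker φ` is the ideal generated by
`Z₂² − Z₁^r Z₃`, `Z₂Z₃ − Z₁^{r+s}`, and `Z₃² − Z₁^s Z₂`. -/
theorem stmt3 (K : Type*) [Field K] (r s : ℕ) (hr : 1 ≤ r) (hrs : r < s)
    (h3 : ¬ (3 ∣ (s - r)))
    (φ : MvPolynomial (Fin 3) K →ₐ[K] Polynomial K)
    (hφ : φ = MvPolynomial.aeval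
      ![(Polynomial.X : Polynomial K) ^ 3, Polynomial.X ^ (2*r+s), Polynomial.X ^ (r+2*s)]) :
    RingHom.ker φ.toRingHom =
      Ideal.span ({ (MvPolynomial.X 1)^2 - (MvPolynomial.X 0)^r * MvPolynomial.X 2,
        MvPolynomial.X 1 * MvPolynomial.X 2 - (MvPolynomial.X 0)^(r+s),
        (MvPolynomial.X 2)^2 - (MvPolynomial.X 0)^s * MvPolynomial.X 1 } :
        Set (MvPolynomial (Fin 3) K)) := by
  subst hφ
  set v := ![(Polynomial.X : Polynomial K) ^ 3, Polynomial.X ^ (2*r+s), Polynomial.X ^ (r+2*s)]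
    with hv
  set φ := (MvPolynomial.aeval v : MvPolynomial (Fin 3) K →ₐ[K] Polynomial K) with hφ
  have hv0 : φ (MvPolynomial.X 0) = Polynomial.X ^ 3 := by simp [hφ, hv]
  have hv1 : φ (MvPolynomial.X 1) = Polynomial.X ^ (2*r+s) := by simp [hφ, hv]
  have hv2 : φ (MvPolynomial.X 2) = Polynomial.X ^ (r+2*s) := by simp [hφ, hv]
  have hIker : Ideal.span ({ (MvPolynomial.X 1)^2 - (MvPolynomial.X 0)^r * MvPolynomial.X 2,
        MvPolynomial.X 1 * MvPolynomial.X 2 - (MvPolynomial.X 0)^(r+s),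
        (MvPolynomial.X 2)^2 - (MvPolynomial.X 0)^s * MvPolynomial.X 1 } :
        Set (MvPolynomial (Fin 3) K)) ≤ RingHom.ker φ.toRingHom := by
    rw [Ideal.span_le]
    rintro g (rfl | rfl | rfl) <;>
      simp only [SetLike.mem_coe, RingHom.mem_ker, AlgHom.toRingHom_eq_coe,
        RingHom.coe_coe, map_sub, map_mul, map_pow, hv0, hv1, hv2]
    · rw [← pow_mul, ← pow_mul, ← pow_add,
        show (2*r+s)*2 = 3*r+(r+2*s) from by ring, sub_self]
    · rw [← pow_add, ← pow_mul, show (2*r+s)+(r+2*s) = 3*(r+s) from by ring, sub_self]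
    · rw [← pow_mul, ← pow_mul, ← pow_add,
        show (r+2*s)*2 = 3*s+(2*r+s) from by ring, sub_self]
  refine le_antisymm ?_ hIker
  intro f hf
  obtain ⟨a, b, c, hmem⟩ := stmt3_reduce K r s f
  have hg0 : φ (Polynomial.aeval (MvPolynomial.X 0) a
      + Polynomial.aeval (MvPolynomial.X 0) b * MvPolynomial.X 1
      + Polynomial.aeval (MvPolynomial.X 0) c * MvPolynomial.X 2) = 0 := by
    have h1 : φ (f - _) = 0 := hIker hmem
    have h2 : φ f = 0 := hf
    rw [map_sub, h2, zero_sub, neg_eq_zero] at h1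
    exact h1
  have hcalc : Polynomial.expand K 3 a + Polynomial.expand K 3 b * Polynomial.X ^ (2*r+s)
      + Polynomial.expand K 3 c * Polynomial.X ^ (r+2*s) = 0 := by
    have ea : ∀ q : Polynomial K, φ (Polynomial.aeval (MvPolynomial.X 0) q)
        = Polynomial.expand K 3 q := by
      intro q
      rw [← Polynomial.aeval_algHom_apply, hv0, Polynomial.aeval_def,
        Polynomial.algebraMap_eq, ← Polynomial.coe_expand]
    rw [map_add, map_add, map_mul, map_mul, ea, ea, ea, hv1, hv2] at hg0
    exact hg0
  obtain ⟨ha, hb, hc⟩ := stmt3_vanish K (2*r+s) (r+2*s) (by omega) (by omega) (by omega)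
    a b c hcalc
  subst ha hb hc
  simpa using hmem
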